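/- The wobbling group W(ℤ) of the integers with their usual metric is not locally residually finite: there exists a finitely generated subgroup of W(ℤ) that is not residually finite. -/

import Mathlib

/-- The wobbling group of a metric space: all permutations of bounded displacement. -/
def Wobbling (X : Type*) [MetricSpace X] : Subgroup (Equiv.Perm X) where
  carrier := {α : Equiv.Perm X | ∃ r : ℝ, ∀ x : X, dist x (α x) ≤ r}
  one_mem' := ⟨0, fun x => by simp⟩
  mul_mem' := by
    rintro a b ⟨r, hr⟩ ⟨s, hs⟩
    exact ⟨s + r, fun x =>
      (dist_triangle x (b x) (a (b x))).trans (add_le_add (hs x) (hr (b x)))⟩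
  inv_mem' := by
    rintro a ⟨r, hr⟩
    refine ⟨r, fun x => ?_⟩
    have := hr (a⁻¹ x)
    simpa [dist_comm] using this

/-- A group is residually finite if every non-identity element survives in some finite
quotient. -/
def IsResiduallyFinite (K : Type*) [Group K] : Prop :=
  ∀ k : K, k ≠ 1 → ∃ (F : Type) (_ : Group F) (_ : Finite F) (π : K →* F), π k ≠ 1

open Equiv
open scoped commutatorElement

noncomputable section

lemma swap_mem_wobbling (i j : ℤ) : Equiv.swap i j ∈ Wobbling ℤ := by
  refine ⟨dist i j, fun x => ?_⟩
  rcases eq_or_ne x i with rfl | hi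
  · simp [Equiv.swap_apply_left]
  rcases eq_or_ne x j with rfl | hj
  · simp [Equiv.swap_apply_right, dist_comm]
  · simp [Equiv.swap_apply_of_ne_of_ne hi hj, dist_nonneg]

def wT : Perm ℤ := Equiv.addRight (3 : ℤ)

lemma wT_mem : wT ∈ Wobbling ℤ := by
  refine ⟨3, fun x => ?_⟩
  simp [wT, Int.dist_eq]
  norm_num [Int.norm_eq_abs]

lemma wT_pow (n : ℕ) : (wT ^ n : Perm ℤ) = Equiv.addRight (3 * n : ℤ) := by
  induction n with
  | zero => ext x; simp
  | succ n ih =>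
    rw [pow_succ, ih]
    ext x
    simp [wT, Equiv.addRight]
    ring

-- conjugate of swap 0 1 by wT^n is a swap disjoint from swap 1 2, for n ≥ 1
lemma conj_commute (n : ℕ) (hn : 1 ≤ n) :
    Commute (wT ^ n * Equiv.swap (0:ℤ) 1 * (wT ^ n)⁻¹) (Equiv.swap (1:ℤ) 2) := by
  rw [wT_pow, ← Equiv.swap_apply_apply]
  have h3 : (3 : ℤ) ≤ 3 * n := by
    have : (1 : ℤ) ≤ n := by exact_mod_cast hn
    linarith
  refine (Perm.Disjoint.commute ?_)
  have hsw : Equiv.swap ((Equiv.addRight (3 * (n:ℤ))) 0) ((Equiv.addRight (3 * (n:ℤ))) 1)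
      = Equiv.swap (3 * (n:ℤ)) (1 + 3 * n) := by
    norm_num [Equiv.addRight]
  rw [hsw]
  intro x
  by_cases hx : x = 3 * (n:ℤ) ∨ x = 1 + 3 * n
  · right
    rcases hx with rfl | rfl <;>
      exact Equiv.swap_apply_of_ne_of_ne (by omega) (by omega)
  · push_neg at hx
    left
    exact Equiv.swap_apply_of_ne_of_ne hx.1 hx.2

/-- The wobbling group `W(ℤ)` is not locally residually finite:
it has a finitely generated subgroup that is not residually finite. -/
theorem stmt_17 :
    ∃ H : Subgroup ↥(Wobbling ℤ), H.FG ∧ ¬ IsResiduallyFinite ↥H := by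
  set A : ↥(Wobbling ℤ) := ⟨Equiv.swap 0 1, swap_mem_wobbling 0 1⟩ with hA
  set B : ↥(Wobbling ℤ) := ⟨Equiv.swap 1 2, swap_mem_wobbling 1 2⟩ with hB
  set T : ↥(Wobbling ℤ) := ⟨wT, wT_mem⟩ with hT
  refine ⟨Subgroup.closure {A, B, T}, ?_, ?_⟩
  · exact (Subgroup.fg_iff _).2 ⟨{A, B, T}, rfl, (Set.finite_singleton T).insert B |>.insert A⟩
  · intro hrf
    have hAm : A ∈ Subgroup.closure {A, B, T} :=
      Subgroup.subset_closure (by simp)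
    have hBm : B ∈ Subgroup.closure {A, B, T} :=
      Subgroup.subset_closure (by simp)
    have hTm : T ∈ Subgroup.closure {A, B, T} :=
      Subgroup.subset_closure (by simp)
    set A' : ↥(Subgroup.closure {A, B, T}) := ⟨A, hAm⟩
    set B' : ↥(Subgroup.closure {A, B, T}) := ⟨B, hBm⟩
    set T' : ↥(Subgroup.closure {A, B, T}) := ⟨T, hTm⟩
    have hk : (⁅A', B'⁆ : ↥(Subgroup.closure {A, B, T})) ≠ 1 := by
      intro h
      have h2 : (⁅A, B⁆ : ↥(Wobbling ℤ)) = 1 := congrArg Subtype.val h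
      have h3 : (⁅(Equiv.swap (0:ℤ) 1 : Perm ℤ), Equiv.swap 1 2⁆ : Perm ℤ) = 1 :=
        congrArg Subtype.val h2
      have h4 := congrFun (congrArg (fun (p : Perm ℤ) => (p : ℤ → ℤ)) h3) 0
      simp [commutatorElement_def, Equiv.swap_apply_def, Perm.mul_apply] at h4
    obtain ⟨F, _, _, π, hπ⟩ := hrf ⁅A', B'⁆ hk
    apply hπ
    -- key: π T' has finite order n ≥ 1
    have hfin : IsOfFinOrder (π T') := isOfFinOrder_of_finite _
    set n := orderOf (π T') with hn
    have hn1 : 1 ≤ n := hfin.orderOf_pos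
    have hpow : π T' ^ n = 1 := pow_orderOf_eq_one _
    -- conjugate A' by T'^n
    have hconj : π (T' ^ n * A' * (T' ^ n)⁻¹) = π A' := by
      rw [map_mul, map_mul, map_inv, map_pow, hpow]
      group
    have hcomm : Commute (T' ^ n * A' * (T' ^ n)⁻¹) B' := by
      have h := conj_commute n hn1
      unfold Commute SemiconjBy at h ⊢
      apply Subtype.ext
      apply Subtype.ext
      push_cast
      exact h
    have hc1 : π ⁅T' ^ n * A' * (T' ^ n)⁻¹, B'⁆ = 1 := by
      rw [hcomm.commutator_eq, map_one]
    have : π ⁅A', B'⁆ = π ⁅T' ^ n * A' * (T' ^ n)⁻¹, B'⁆ := by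
      rw [map_commutatorElement, map_commutatorElement, hconj]
    rw [this, hc1]

end
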